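/- Let γ > 0 and ν > 0, and for x > 0 define λ_{γ,ν}(x) = −ln[1 − I(x²/(x² + γ²ν); 1/2, ν/2)] / x, where I denotes the regularized incomplete beta function. Then λ_{γ,ν}(x) tends to 0 as x → ∞. -/

import Mathlib

open MeasureTheory Set Filter

/-- The Beta function `B(a, b) = ∫_0^1 u^{a-1} (1-u)^{b-1} du`. -/
noncomputable def betaFn (a b : ℝ) : ℝ :=
  ∫ u in Ioo (0:ℝ) 1, u ^ (a - 1) * (1 - u) ^ (b - 1)

/-- The regularized incomplete beta function `I(z; a, b)`. -/
noncomputable def regIncBeta (a b z : ℝ) : ℝ :=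
  (∫ u in Ioo (0:ℝ) z, u ^ (a - 1) * (1 - u) ^ (b - 1)) / betaFn a b

lemma betaIntegrand_intervalIntegrable (b : ℝ) (hb : 0 < b) :
    IntervalIntegrable (fun u : ℝ => u ^ ((1:ℝ)/2 - 1) * (1 - u) ^ (b - 1)) volume 0 1 := by
  have h1 : IntervalIntegrable (fun u : ℝ => u ^ ((1:ℝ)/2 - 1) * (1 - u) ^ (b - 1))
      volume 0 (1/2) := by
    apply IntervalIntegrable.mul_continuousOn
    · exact intervalIntegral.intervalIntegrable_rpow' (by norm_num)
    · apply (continuous_const.sub continuous_id').continuousOn.rpow_const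
      intro x hx
      rw [uIcc_of_le (by norm_num : (0:ℝ) ≤ 1/2)] at hx
      left; show (1:ℝ) - x ≠ 0; intro h; linarith [hx.2]
  have h2 : IntervalIntegrable (fun u : ℝ => u ^ ((1:ℝ)/2 - 1) * (1 - u) ^ (b - 1))
      volume (1/2) 1 := by
    have base : IntervalIntegrable (fun u : ℝ => (1 - u) ^ (b - 1)) volume (1/2) 1 := by
      have := (intervalIntegral.intervalIntegrable_rpow'
        (a := 0) (b := 1/2) (r := b - 1) (by linarith)).comp_sub_left 1
      norm_num at this
      exact this.symm
    have := base.mul_continuousOn (g := fun u : ℝ => u ^ ((1:ℝ)/2 - 1)) ?_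
    · simpa [mul_comm] using this
    · apply continuousOn_id.rpow_const
      intro x hx
      rw [uIcc_of_le (by norm_num : (1:ℝ)/2 ≤ 1)] at hx
      left; simp only [id_eq]; intro h; rw [h] at hx; norm_num at hx
  exact h1.trans h2

lemma betaIntegrand_integrableOn (b : ℝ) (hb : 0 < b) :
    IntegrableOn (fun u : ℝ => u ^ ((1:ℝ)/2 - 1) * (1 - u) ^ (b - 1)) (Ioo 0 1) volume :=
  ((intervalIntegrable_iff_integrableOn_Ioc_of_le (by norm_num)).mp
    (betaIntegrand_intervalIntegrable b hb)).mono_set Ioo_subset_Ioc_self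

lemma betaIntegrand_pos (b : ℝ) {u : ℝ} (hu : u ∈ Ioo (0:ℝ) 1) :
    0 < u ^ ((1:ℝ)/2 - 1) * (1 - u) ^ (b - 1) :=
  mul_pos (Real.rpow_pos_of_pos hu.1 _) (Real.rpow_pos_of_pos (by linarith [hu.2]) _)

lemma betaFn_pos (b : ℝ) (hb : 0 < b) : 0 < betaFn (1/2) b := by
  rw [betaFn, setIntegral_pos_iff_support_of_nonneg_ae]
  · refine lt_of_lt_of_le ?_ (measure_mono (fun u hu => ⟨(betaIntegrand_pos b hu).ne', hu⟩))
    · simp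
  · rw [EventuallyLE, ae_restrict_iff' measurableSet_Ioo]
    filter_upwards with u hu
    exact (betaIntegrand_pos b hu).le
  · exact betaIntegrand_integrableOn b hb

lemma split_integral (b z : ℝ) (hb : 0 < b) (hz : z ∈ Ioo (0:ℝ) 1) :
    (∫ u in Ioo (0:ℝ) 1, u ^ ((1:ℝ)/2 - 1) * (1 - u) ^ (b - 1)) =
      (∫ u in Ioo (0:ℝ) z, u ^ ((1:ℝ)/2 - 1) * (1 - u) ^ (b - 1)) +
      (∫ u in Ioo z 1, u ^ ((1:ℝ)/2 - 1) * (1 - u) ^ (b - 1)) := by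
  have hI := betaIntegrand_integrableOn b hb
  rw [← Set.Ioo_union_Ico_eq_Ioo hz.1 hz.2.le,
    setIntegral_union ((Set.Ico_disjoint_Ico_same).mono_left Set.Ioo_subset_Ico_self) measurableSet_Ico
      (hI.mono_set (by rw [← Set.Ioo_union_Ico_eq_Ioo hz.1 hz.2.le]; exact subset_union_left))
      (hI.mono_set (by rw [← Set.Ioo_union_Ico_eq_Ioo hz.1 hz.2.le]; exact subset_union_right)),
    setIntegral_congr_set Ioo_ae_eq_Ico.symm]

lemma tail_integrableOn (b z : ℝ) (hb : 0 < b) :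
    IntegrableOn (fun u : ℝ => (1 - u) ^ (b - 1)) (Ioo z 1) volume := by
  have := (intervalIntegral.intervalIntegrable_rpow'
    (a := 0) (b := 1 - z) (r := b - 1) (by linarith)).comp_sub_left 1
  norm_num at this
  rcases le_or_gt z 1 with h | h
  · exact ((intervalIntegrable_iff_integrableOn_Ioc_of_le h).mp this.symm).mono_set
      Ioo_subset_Ioc_self
  · rw [Ioo_eq_empty (by linarith)]; simp

lemma tail_value (b z : ℝ) (hb : 0 < b) (hz : z ∈ Ioo (0:ℝ) 1) :
    (∫ u in Ioo z 1, (1 - u) ^ (b - 1)) = (1 - z) ^ b / b := by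
  have h1 : (∫ u in Ioo z 1, (1 - u) ^ (b - 1)) = ∫ u in z..1, (1 - u) ^ (b - 1) := by
    rw [intervalIntegral.integral_of_le hz.2.le, setIntegral_congr_set Ioo_ae_eq_Ioc]
  rw [h1, intervalIntegral.integral_comp_sub_left (fun v => v ^ (b - 1)) 1]
  norm_num
  rw [integral_rpow (Or.inl (by linarith))]
  rw [Real.zero_rpow (by linarith : b - 1 + 1 ≠ 0)]
  ring_nf

/-- For `z ∈ (0,1)`, the "survival" value `1 - I(z)` is at least `(1-z)^b/(b·B)`. -/
lemma one_sub_regIncBeta_ge (b z : ℝ) (hb : 0 < b) (hz : z ∈ Ioo (0:ℝ) 1) :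
    (1 - z) ^ b / (b * betaFn (1/2) b) ≤ 1 - regIncBeta (1/2) b z := by
  have hB := betaFn_pos b hb
  have hsplit := split_integral b z hb hz
  have htail : (1 - z) ^ b / b ≤ ∫ u in Ioo z 1, u ^ ((1:ℝ)/2 - 1) * (1 - u) ^ (b - 1) := by
    rw [← tail_value b z hb hz]
    refine setIntegral_mono_on (tail_integrableOn b z hb)
      ((betaIntegrand_integrableOn b hb).mono_set (fun u hu => ⟨hz.1.trans hu.1, hu.2⟩))
      measurableSet_Ioo (fun u hu => ?_)
    have hu01 : u ∈ Ioo (0:ℝ) 1 := ⟨hz.1.trans hu.1, hu.2⟩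
    have h1 : (1:ℝ) ≤ u ^ ((1:ℝ)/2 - 1) :=
      Real.one_le_rpow_of_pos_of_le_one_of_nonpos hu01.1 hu01.2.le (by norm_num)
    nlinarith [Real.rpow_nonneg (by linarith [hu01.2] : (0:ℝ) ≤ 1 - u) (b - 1)]
  have key : regIncBeta (1/2) b z =
      ((betaFn (1/2) b) - ∫ u in Ioo z 1, u ^ ((1:ℝ)/2 - 1) * (1 - u) ^ (b - 1))
        / betaFn (1/2) b := by
    rw [regIncBeta]
    congr 1
    have : betaFn (1/2) b = ∫ u in Ioo (0:ℝ) 1, u ^ ((1:ℝ)/2 - 1) * (1 - u) ^ (b - 1) := rfl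
    rw [this, hsplit, add_sub_cancel_right]
  rw [key]
  have h2 : 1 - (betaFn (1/2) b - ∫ u in Ioo z 1, u ^ ((1:ℝ)/2 - 1) * (1 - u) ^ (b - 1))
      / betaFn (1/2) b
      = (∫ u in Ioo z 1, u ^ ((1:ℝ)/2 - 1) * (1 - u) ^ (b - 1)) / betaFn (1/2) b := by
    field_simp
    ring
  rw [h2, ← div_div]
  exact (div_le_div_iff_of_pos_right hB).mpr htail

lemma log_sq_add_div_tendsto (c : ℝ) (hc : 0 < c) :
    Tendsto (fun x : ℝ => Real.log (x^2 + c) / x) atTop (nhds 0) := by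
  have hup : Tendsto (fun x : ℝ => Real.log 2 / x + 2 * (Real.log x / x)) atTop (nhds 0) := by
    have h1 : Tendsto (fun x : ℝ => Real.log 2 / x) atTop (nhds 0) :=
      Tendsto.div_atTop tendsto_const_nhds tendsto_id
    have h2 : Tendsto (fun x : ℝ => Real.log x / x) atTop (nhds 0) :=
      Real.isLittleO_log_id_atTop.tendsto_div_nhds_zero
    have := h1.add (h2.const_mul 2)
    simpa using this
  refine tendsto_of_tendsto_of_tendsto_of_le_of_le' tendsto_const_nhds hup ?_ ?_
  · filter_upwards [eventually_ge_atTop (1:ℝ)] with x hx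
    have hx0 : (0:ℝ) < x := by linarith
    have : (1:ℝ) ≤ x^2 + c := by nlinarith
    exact div_nonneg (Real.log_nonneg this) hx0.le
  · filter_upwards [eventually_ge_atTop (1:ℝ), eventually_ge_atTop c] with x hx1 hxc
    have hx0 : (0:ℝ) < x := by linarith
    have hle : x^2 + c ≤ 2 * x^2 := by nlinarith
    have hlog : Real.log (x^2 + c) ≤ Real.log 2 + 2 * Real.log x := by
      calc Real.log (x^2 + c) ≤ Real.log (2 * x^2) := Real.log_le_log (by positivity) hle
        _ = Real.log 2 + 2 * Real.log x := by
          rw [Real.log_mul (by norm_num) (by positivity), Real.log_pow]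
          push_cast; ring
    rw [div_le_iff₀ hx0]
    calc Real.log (x^2 + c) ≤ Real.log 2 + 2 * Real.log x := hlog
      _ = (Real.log 2 / x + 2 * (Real.log x / x)) * x := by field_simp

/-- As `x → ∞`, the tail-matching rate `λ_{γ,ν}(x)` tends to `0`. -/
theorem lambda_tendsto_at_top (γ ν : ℝ) (hγ : 0 < γ) (hν : 0 < ν) :
    Tendsto
      (fun x : ℝ =>
        - Real.log (1 - regIncBeta (1/2) (ν/2) (x^2 / (x^2 + γ^2 * ν))) / x)
      atTop (nhds 0) := by
  set b : ℝ := ν / 2 with hbdef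
  have hb : 0 < b := by positivity
  set B : ℝ := betaFn (1/2) b with hBdef
  have hB : 0 < B := betaFn_pos b hb
  set A : ℝ := Real.log (b * B) - b * Real.log (γ^2 * ν) with hAdef
  have hc : 0 < γ^2 * ν := by positivity
  have hg : Tendsto (fun x : ℝ => (A + b * Real.log (x^2 + γ^2 * ν)) / x) atTop (nhds 0) := by
    have h1 : Tendsto (fun x : ℝ => A / x) atTop (nhds 0) :=
      Tendsto.div_atTop tendsto_const_nhds tendsto_id
    have h2 := (log_sq_add_div_tendsto (γ^2 * ν) hc).const_mul b
    have h3 := h1.add h2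
    simp only [add_zero, mul_zero] at h3
    refine h3.congr (fun x => ?_)
    rw [add_div, mul_div_assoc]
  refine tendsto_of_tendsto_of_tendsto_of_le_of_le' tendsto_const_nhds hg ?_ ?_
  · filter_upwards [eventually_ge_atTop (1:ℝ)] with x hx
    have hx0 : (0:ℝ) < x := by linarith
    have hden : 0 < x^2 + γ^2 * ν := by positivity
    set z : ℝ := x^2 / (x^2 + γ^2 * ν) with hzdef
    have hz : z ∈ Ioo (0:ℝ) 1 := ⟨by positivity, (div_lt_one hden).mpr (by nlinarith)⟩
    have hlow := one_sub_regIncBeta_ge b z hb hz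
    have hplow : 0 < (1 - z) ^ b / (b * B) :=
      div_pos (Real.rpow_pos_of_pos (by linarith [hz.2]) b) (by positivity)
    have hIne : 0 ≤ regIncBeta (1/2) b z := by
      refine div_nonneg (setIntegral_nonneg measurableSet_Ioo (fun u hu => ?_)) hB.le
      exact (betaIntegrand_pos b ⟨hu.1, hu.2.trans hz.2⟩).le
    have hlog : Real.log (1 - regIncBeta (1/2) b z) ≤ 0 :=
      Real.log_nonpos (by linarith [hplow.trans_le hlow]) (by linarith)
    exact div_nonneg (by linarith) hx0.le
  · filter_upwards [eventually_ge_atTop (1:ℝ)] with x hx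
    have hx0 : (0:ℝ) < x := by linarith
    have hden : 0 < x^2 + γ^2 * ν := by positivity
    set z : ℝ := x^2 / (x^2 + γ^2 * ν) with hzdef
    have hz : z ∈ Ioo (0:ℝ) 1 := ⟨by positivity, (div_lt_one hden).mpr (by nlinarith)⟩
    have h1z : 1 - z = γ^2 * ν / (x^2 + γ^2 * ν) := by
      rw [hzdef]; field_simp
      ring
    have hlow := one_sub_regIncBeta_ge b z hb hz
    have h1zpos : 0 < 1 - z := by linarith [hz.2]
    have hplow : 0 < (1 - z) ^ b / (b * B) :=
      div_pos (Real.rpow_pos_of_pos h1zpos b) (by positivity)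
    have hmono := Real.log_le_log hplow hlow
    have hval : Real.log ((1 - z) ^ b / (b * B)) =
        b * Real.log (1 - z) - Real.log (b * B) := by
      rw [Real.log_div (Real.rpow_pos_of_pos h1zpos b).ne' (by positivity),
        Real.log_rpow h1zpos]
    have h1zlog : Real.log (1 - z) = Real.log (γ^2 * ν) - Real.log (x^2 + γ^2 * ν) := by
      rw [h1z, Real.log_div hc.ne' hden.ne']
    have hnum : - Real.log (1 - regIncBeta (1/2) b z) ≤ A + b * Real.log (x^2 + γ^2 * ν) := by
      rw [hAdef]
      have := hmono
      rw [hval, h1zlog] at this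
      nlinarith [this]
    calc - Real.log (1 - regIncBeta (1/2) b z) / x
        ≤ (A + b * Real.log (x^2 + γ^2 * ν)) / x :=
          (div_le_div_iff_of_pos_right hx0).mpr hnum
      _ = (A + b * Real.log (x^2 + γ^2 * ν)) / x := rfl
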